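/- Let G be a simple graph on a finite vertex type V in which every vertex has degree at most d, let r,k,s ∈ ℕ with k ≥ 1, and let I be a finite set of vertices with |I| ≤ s. Then the number of tuples a : Fin k → V such that (i) the simple graph on Fin k with an edge between i ≠ j iff dist_G(a_i,a_j) ≤ r is connected, and (ii) there exist an index i and a vertex c ∈ I with dist_G(a_i,c) ≤ r, is at most s·(∑_{i=0}^{k·r} d^i)^k. -/

import Mathlib

/-- `distLE G r a b` : there is a walk in `G` from `a` to `b` of length at most `r`. -/
def distLE {V : Type*} (G : SimpleGraph V) (r : ℕ) (a b : V) : Prop :=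
  ∃ w : G.Walk a b, w.length ≤ r


lemma distLE_mono {V : Type*} {G : SimpleGraph V} {m n : ℕ} (h : m ≤ n) {a b : V}
    (hd : distLE G m a b) : distLE G n a b := by
  obtain ⟨w, hw⟩ := hd; exact ⟨w, hw.trans h⟩

lemma distLE_trans {V : Type*} {G : SimpleGraph V} {m n : ℕ} {a b c : V}
    (h1 : distLE G m a b) (h2 : distLE G n b c) : distLE G (m + n) a c := by
  obtain ⟨w1, hw1⟩ := h1; obtain ⟨w2, hw2⟩ := h2
  exact ⟨w1.append w2, by rw [SimpleGraph.Walk.length_append]; omega⟩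

-- biUnion over a finite set, uniform bound
lemma ncard_biUnion_le_mul {α β : Type*} [Fintype β] {s : Set α} (hs : s.Finite)
    {f : α → Set β} {d : ℕ} (hf : ∀ a ∈ s, (f a).ncard ≤ d) :
    (⋃ a ∈ s, f a).ncard ≤ s.ncard * d := by
  revert hf
  refine Set.Finite.induction_on s hs (by simp) ?_
  intro x t hx hsf ih hf
  rw [Set.biUnion_insert]
  calc (f x ∪ ⋃ a ∈ t, f a).ncard ≤ (f x).ncard + (⋃ a ∈ t, f a).ncard :=
        Set.ncard_union_le _ _
    _ ≤ d + t.ncard * d := by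
        gcongr
        · exact hf x (Set.mem_insert _ _)
        · exact ih fun a ha => hf a (Set.mem_insert_of_mem _ ha)
    _ ≤ (insert x t).ncard * d := by
        rw [Set.ncard_insert_of_notMem hx hsf]; ring_nf; omega

lemma ncard_biUnion_finset_le {α β : Type*} [Fintype β] (I : Finset α) (f : α → Set β) :
    (⋃ a ∈ I, f a).ncard ≤ ∑ a ∈ I, (f a).ncard := by
  classical
  induction I using Finset.induction_on with
  | empty => simp
  | insert _ _ hx ih =>
    rename_i x t
    rw [Finset.set_biUnion_insert, Finset.sum_insert hx]
    exact (Set.ncard_union_le _ _).trans (by gcongr)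

lemma ncard_pi_le {V : Type*} [Fintype V] (k : ℕ) (B : Set V) :
    {a : Fin k → V | ∀ j, a j ∈ B}.ncard = B.ncard ^ k := by
  have : {a : Fin k → V | ∀ j, a j ∈ B} = Set.pi Set.univ (fun _ => B) := by
    ext a; simp [Set.mem_pi]
  rw [this, ← Nat.card_coe_set_eq, Nat.card_congr (Equiv.Set.univPi _), Nat.card_pi]
  simp [Nat.card_coe_set_eq]

/-- The `r`-distance type (closeness graph) of a tuple `a : Fin k → V`:
an edge between `i ≠ j` iff `dist_G (a i) (a j) ≤ r`. -/
def closeGraph {V : Type*} (G : SimpleGraph V) (r : ℕ) {k : ℕ} (a : Fin k → V) :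
    SimpleGraph (Fin k) where
  Adj i j := i ≠ j ∧ distLE G r (a i) (a j)
  symm := by
    constructor
    rintro i j ⟨hij, w, hw⟩
    exact ⟨hij.symm, w.reverse, by simpa using hw⟩
  loopless := by constructor; rintro i ⟨hii, -⟩; exact hii rfl


lemma ball_ncard_le {V : Type*} [Fintype V] {G : SimpleGraph V} {d : ℕ}
    (hdeg : ∀ v : V, (G.neighborSet v).ncard ≤ d) (m : ℕ) (c : V) :
    {v | distLE G m v c}.ncard ≤ ∑ i ∈ Finset.range (m + 1), d ^ i := by
  induction m with
  | zero =>
    have hsub : {v | distLE G 0 v c} ⊆ {c} := by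
      rintro v ⟨w, hw⟩
      exact SimpleGraph.Walk.eq_of_length_eq_zero (Nat.le_zero.mp hw)
    simpa using (Set.ncard_le_ncard hsub (Set.toFinite _)).trans (Set.ncard_singleton c).le
  | succ m ih =>
    have hsub : {v | distLE G (m + 1) v c} ⊆
        {c} ∪ ⋃ u ∈ {v | distLE G m v c}, G.neighborSet u := by
      rintro v ⟨w, hw⟩
      cases w with
      | nil => exact Or.inl rfl
      | cons h p =>
        right
        simp only [SimpleGraph.Walk.length_cons] at hw
        exact Set.mem_biUnion (⟨p, by omega⟩ : distLE G m _ c) h.symm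
    calc {v | distLE G (m + 1) v c}.ncard
        ≤ ({c} ∪ ⋃ u ∈ {v | distLE G m v c}, G.neighborSet u).ncard :=
          Set.ncard_le_ncard hsub (Set.toFinite _)
      _ ≤ ({c} : Set V).ncard + (⋃ u ∈ {v | distLE G m v c}, G.neighborSet u).ncard :=
          Set.ncard_union_le _ _
      _ ≤ 1 + {v | distLE G m v c}.ncard * d := by
          gcongr
          · simp
          · exact ncard_biUnion_le_mul (Set.toFinite _) fun u _ => hdeg u
      _ ≤ 1 + (∑ i ∈ Finset.range (m + 1), d ^ i) * d := by gcongr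
      _ = ∑ i ∈ Finset.range (m + 1 + 1), d ^ i := by
          rw [Finset.sum_range_succ' (fun i => d ^ i) (m + 1)]
          simp [pow_succ, ← Finset.sum_mul, add_comm]

lemma walk_close {V : Type*} {G : SimpleGraph V} {r k : ℕ} (a : Fin k → V) {i j : Fin k}
    (w : (closeGraph G r a).Walk i j) : distLE G (w.length * r) (a i) (a j) := by
  induction w with
  | nil => exact ⟨SimpleGraph.Walk.nil, by simp⟩
  | cons h p ih =>
    have := distLE_trans h.2 ih
    exact distLE_mono (by rw [SimpleGraph.Walk.length_cons]; ring_nf; omega) this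

theorem stmt_4 {V : Type*} [Fintype V] (G : SimpleGraph V) (d r k s : ℕ) (hk : 1 ≤ k)
    (hdeg : ∀ v : V, (G.neighborSet v).ncard ≤ d)
    (I : Finset V) (hI : I.card ≤ s) :
    {a : Fin k → V | (closeGraph G r a).Connected ∧
        ∃ i : Fin k, ∃ c ∈ I, distLE G r (a i) c}.ncard ≤
      s * (∑ i ∈ Finset.range (k * r + 1), d ^ i) ^ k := by
  classical
  set B : V → Set V := fun c => {v | distLE G (k * r) v c} with hB
  have key : {a : Fin k → V | (closeGraph G r a).Connected ∧
      ∃ i : Fin k, ∃ c ∈ I, distLE G r (a i) c} ⊆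
      ⋃ c ∈ I, {a : Fin k → V | ∀ j, a j ∈ B c} := by
    rintro a ⟨hconn, i, c, hcI, hic⟩
    refine Set.mem_biUnion hcI fun j => ?_
    obtain ⟨w⟩ := hconn.preconnected j i
    have hp : w.toPath.1.length < k := by
      simpa using w.toPath.2.length_lt
    have h1 := walk_close a w.toPath.1
    have h2 := distLE_trans h1 hic
    refine distLE_mono ?_ h2
    calc w.toPath.1.length * r + r = (w.toPath.1.length + 1) * r := by ring
      _ ≤ k * r := Nat.mul_le_mul_right r (by omega)
  calc {a : Fin k → V | (closeGraph G r a).Connected ∧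
        ∃ i : Fin k, ∃ c ∈ I, distLE G r (a i) c}.ncard
      ≤ (⋃ c ∈ I, {a : Fin k → V | ∀ j, a j ∈ B c}).ncard :=
        Set.ncard_le_ncard key (Set.toFinite _)
    _ ≤ ∑ c ∈ I, {a : Fin k → V | ∀ j, a j ∈ B c}.ncard :=
        ncard_biUnion_finset_le I _
    _ = ∑ c ∈ I, (B c).ncard ^ k := by
        exact Finset.sum_congr rfl fun c _ => ncard_pi_le k (B c)
    _ ≤ ∑ c ∈ I, (∑ i ∈ Finset.range (k * r + 1), d ^ i) ^ k := by
        gcongr with c hc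
        exact ball_ncard_le hdeg (k * r) c
    _ = I.card * (∑ i ∈ Finset.range (k * r + 1), d ^ i) ^ k := by
        rw [Finset.sum_const, smul_eq_mul]
    _ ≤ s * (∑ i ∈ Finset.range (k * r + 1), d ^ i) ^ k := by gcongr
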